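/- arXiv:2306.00802 — 3 statements merged into one kernel-verified Lean document; each statement's English description precedes it below -/
import Mathlib

section
/- For the attention loss L(W) = E[ℓ(y, W_U Φ₂ X σ(X^⊤ W x_T))], the gradient at W = 0 equals ∇_W L(0) = ∑_{k=1}^N E[(p̂(k|X) - 1{y=k}) · (1/T) ∑_{t=1}^T w_U(k)^⊤ Φ₂ x_t · (x_t - x̄_{1:T}) x_T^⊤], where x̄_{1:T} = (1/T)∑_t x_t and p̂(k|X) = σ(W_U Φ₂ X σ(X^⊤·0·x_T))_k is evaluated with uniform attention weights. -/
open Finset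

noncomputable def softmax {n : ℕ} (u : Fin n → ℝ) (t : Fin n) : ℝ :=
  Real.exp (u t) / ∑ s, Real.exp (u s)

noncomputable def crossEntropy {N : ℕ} (y : Fin N) (ξ : Fin N → ℝ) : ℝ :=
  - Real.log (softmax ξ y)

/-- Update the `(a,b)` entry of a matrix to the value `s`. -/
def updEntry {d e : ℕ} (W : Fin d → Fin e → ℝ) (a : Fin d) (b : Fin e) (s : ℝ) :
    Fin d → Fin e → ℝ :=
  Function.update W a (Function.update (W a) b s)

lemma hasDerivAt_sm {T : ℕ} (hT : 0 < T) (c : Fin T → ℝ) (t : Fin T) :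
    HasDerivAt (fun s : ℝ => softmax (fun t' => s * c t') t)
      ((c t * T - ∑ s', c s') / (T:ℝ)^2) 0 := by
  have hnum : HasDerivAt (fun s : ℝ => Real.exp (s * c t)) (c t) 0 := by
    have h1 : HasDerivAt (fun s : ℝ => s * c t) (c t) 0 := by
      simpa using (hasDerivAt_id (0:ℝ)).mul_const (c t)
    simpa using h1.exp
  have hden : HasDerivAt (fun s : ℝ => ∑ s', Real.exp (s * c s')) (∑ s', c s') 0 := by
    apply HasDerivAt.fun_sum
    intro i _
    have h1 : HasDerivAt (fun s : ℝ => s * c i) (c i) 0 := by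
      simpa using (hasDerivAt_id (0:ℝ)).mul_const (c i)
    simpa using h1.exp
  have hden0 : (∑ s' : Fin T, Real.exp (0 * c s')) = (T:ℝ) := by simp
  have hne : (∑ s' : Fin T, Real.exp (0 * c s')) ≠ 0 := by
    rw [hden0]
    exact_mod_cast Nat.pos_iff_ne_zero.mp hT
  have := hnum.div hden hne
  convert this using 1
  · rfl
  · rfl
  · rfl
  rw [hden0]
  simp

lemma crossEntropy_eq {N : ℕ} (y : Fin N) (ξ : Fin N → ℝ) :
    crossEntropy y ξ = Real.log (∑ k, Real.exp (ξ k)) - ξ y := by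
  have hpos : 0 < ∑ k, Real.exp (ξ k) :=
    Finset.sum_pos (fun k _ => Real.exp_pos _) ⟨y, Finset.mem_univ y⟩
  rw [crossEntropy, softmax, Real.log_div (Real.exp_ne_zero _) (ne_of_gt hpos),
    Real.log_exp]
  ring

lemma key {N T : ℕ} (hT : 0 < T) (A : Fin N → Fin T → ℝ) (c : Fin T → ℝ) (y : Fin N) :
    HasDerivAt (fun s : ℝ => crossEntropy y (fun k => ∑ t, A k t * softmax (fun t' => s * c t') t))
      (∑ k, (softmax (fun k' => (1/(T:ℝ)) * ∑ t, A k' t) k - if y = k then 1 else 0) *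
        ((1/(T:ℝ)) * ∑ t, A k t * (c t - (1/(T:ℝ)) * ∑ s', c s'))) 0 := by
  have hTne : (T:ℝ) ≠ 0 := by exact_mod_cast Nat.pos_iff_ne_zero.mp hT
  set D : Fin T → ℝ := fun t => (c t * T - ∑ s', c s') / (T:ℝ)^2 with hD
  have hξ : ∀ k : Fin N, HasDerivAt (fun s : ℝ => ∑ t, A k t * softmax (fun t' => s * c t') t)
      (∑ t, A k t * D t) 0 := by
    intro k
    apply HasDerivAt.fun_sum
    intro t _
    exact (hasDerivAt_sm hT c t).const_mul (A k t)
  have hval : ∀ k : Fin N, (∑ t, A k t * softmax (fun t' => (0:ℝ) * c t') t)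
      = (1/(T:ℝ)) * ∑ t, A k t := by
    intro k
    conv_rhs => rw [Finset.mul_sum]
    congr 1
    ext t
    have : softmax (fun t' : Fin T => (0:ℝ) * c t') t = 1 / T := by
      simp [softmax]
    rw [this]; ring
  have hpos : 0 < ∑ k : Fin N, Real.exp (∑ t, A k t * softmax (fun t' => (0:ℝ) * c t') t) :=
    Finset.sum_pos (fun k _ => Real.exp_pos _) ⟨y, Finset.mem_univ y⟩
  have hsum : HasDerivAt (fun s : ℝ => ∑ k : Fin N, Real.exp (∑ t, A k t * softmax (fun t' => s * c t') t))
      (∑ k : Fin N, Real.exp ((1/(T:ℝ)) * ∑ t, A k t) * (∑ t, A k t * D t)) 0 := by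
    apply HasDerivAt.fun_sum
    intro k _
    have := (hξ k).exp
    rw [hval k] at this
    exact this
  have hlog := hsum.log (ne_of_gt hpos)
  have hce : (fun s : ℝ => crossEntropy y (fun k => ∑ t, A k t * softmax (fun t' => s * c t') t))
      = fun s : ℝ => Real.log (∑ k : Fin N, Real.exp (∑ t, A k t * softmax (fun t' => s * c t') t))
          - ∑ t, A y t * softmax (fun t' => s * c t') t := by
    funext s
    rw [crossEntropy_eq]
  rw [hce]
  have hmain := hlog.sub (hξ y)
  convert hmain using 1
  · rfl
  · rfl
  · rfl
  have hSg : (∑ k : Fin N, Real.exp (∑ t, A k t * softmax (fun t' => (0:ℝ) * c t') t))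
      = ∑ k : Fin N, Real.exp ((1/(T:ℝ)) * ∑ t, A k t) := by
    congr 1; ext k; rw [hval k]
  rw [hSg] at hpos ⊢
  set Se : ℝ := ∑ k : Fin N, Real.exp ((1/(T:ℝ)) * ∑ t, A k t) with hSe
  have hDt : ∀ t, D t = (1/(T:ℝ)) * (c t - (1/(T:ℝ)) * ∑ s', c s') := by
    intro t
    rw [hD, pow_two]
    field_simp
  have hsm : ∀ k : Fin N, softmax (fun k' => (1/(T:ℝ)) * ∑ t, A k' t) k
      = Real.exp ((1/(T:ℝ)) * ∑ t, A k t) / Se := by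
    intro k; simp only [softmax, hSe]
  have hξ' : ∀ k : Fin N, (∑ t, A k t * D t)
      = (1/(T:ℝ)) * ∑ t, A k t * (c t - (1/(T:ℝ)) * ∑ s', c s') := by
    intro k
    conv_rhs => rw [Finset.mul_sum]
    congr 1; ext t; rw [hDt t]; ring
  calc ∑ k, (softmax (fun k' => (1/(T:ℝ)) * ∑ t, A k' t) k - if y = k then 1 else 0) *
        ((1/(T:ℝ)) * ∑ t, A k t * (c t - (1/(T:ℝ)) * ∑ s', c s'))
      = ∑ k, (Real.exp ((1/(T:ℝ)) * ∑ t, A k t) / Se) * (∑ t, A k t * D t)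
        - ∑ k, (if y = k then 1 else 0) * (∑ t, A k t * D t) := by
        rw [← Finset.sum_sub_distrib]
        congr 1; ext k; rw [hsm k, hξ' k]; ring
    _ = (∑ k, Real.exp ((1/(T:ℝ)) * ∑ t, A k t) * (∑ t, A k t * D t)) / Se
        - ∑ t, A y t * D t := by
        congr 1
        · rw [Finset.sum_div]; congr 1; ext k; ring
        · simp

/-- for the attention loss `L(W) = E[ℓ(y, W_U Φ₂ X σ(X^⊤ W x_T))]`, the
gradient at `W = 0` (stated entrywise) equals
`∑_k E[(p̂(k|X) - 1{y=k}) · (1/T) ∑_t w_U(k)^⊤ Φ₂ x_t · (x_t - x̄_{1:T}) x_T^⊤]`,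
where `p̂(k|X)` is evaluated with uniform attention weights. -/
theorem grad_attention_layer_at_zero {N T d : ℕ} (hT : 0 < T) {Ω : Type} [Fintype Ω]
    (p : Ω → ℝ) (hp0 : ∀ ω, 0 ≤ p ω) (hp1 : ∑ ω, p ω = 1)
    -- sequences X = [x_1, ..., x_T] and labels y
    (X : Ω → Fin T → Fin d → ℝ) (Y : Ω → Fin N)
    (Φ₂ : Fin d → Fin d → ℝ) (wU : Fin N → Fin d → ℝ)
    -- the last token x_T
    (τ : Fin T) (hτ : (τ : ℕ) = T - 1)
    -- logits ξ(X)_k = ∑_t (w_U(k)^⊤ Φ₂ x_t) σ(X^⊤ W x_T)_t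
    (ξ : (Fin d → Fin d → ℝ) → Ω → Fin N → ℝ)
    (hξ : ∀ W ω k, ξ W ω k = ∑ t,
      (∑ i, wU k i * ∑ j, Φ₂ i j * X ω t j) *
        softmax (fun t' => ∑ i, X ω t' i * ∑ j, W i j * X ω τ j) t)
    (L : (Fin d → Fin d → ℝ) → ℝ)
    (hL : ∀ W, L W = ∑ ω, p ω * crossEntropy (Y ω) (ξ W ω))
    -- p̂(k|X) with uniform attention weights
    (phat : Ω → Fin N → ℝ)
    (hphat : ∀ ω k, phat ω k =
      softmax (fun k' => (1 / (T : ℝ)) * ∑ t, ∑ i, wU k' i * ∑ j, Φ₂ i j * X ω t j) k) :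
    ∀ a b, HasDerivAt (fun s : ℝ => L (updEntry (0 : Fin d → Fin d → ℝ) a b s))
      (∑ k, ∑ ω, p ω * (phat ω k - if Y ω = k then 1 else 0) *
        ((1 / (T : ℝ)) * ∑ t, (∑ i, wU k i * ∑ j, Φ₂ i j * X ω t j) *
          ((X ω t a - (1 / (T : ℝ)) * ∑ s, X ω s a) * X ω τ b))) 0 := by
  intro a b
  set A : Ω → Fin N → Fin T → ℝ := fun ω k t => ∑ i, wU k i * ∑ j, Φ₂ i j * X ω t j with hA
  set c : Ω → Fin T → ℝ := fun ω t => X ω t a * X ω τ b with hc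
  have hupd : ∀ ω (t' : Fin T) (s : ℝ),
      (∑ i, X ω t' i * ∑ j, updEntry (0 : Fin d → Fin d → ℝ) a b s i j * X ω τ j)
        = s * c ω t' := by
    intro ω t' s
    have h1 : ∀ i : Fin d, (∑ j, updEntry (0 : Fin d → Fin d → ℝ) a b s i j * X ω τ j)
        = if i = a then s * X ω τ b else 0 := by
      intro i
      by_cases hia : i = a
      · subst hia
        simp [updEntry, Function.update_apply, ite_mul]
      · simp [updEntry, Function.update_apply, hia]
    calc (∑ i, X ω t' i * ∑ j, updEntry (0 : Fin d → Fin d → ℝ) a b s i j * X ω τ j)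
        = ∑ i, (if i = a then X ω t' i * (s * X ω τ b) else 0) := by
          congr 1; ext i; rw [h1 i]
          by_cases hia : i = a <;> simp [hia]
      _ = X ω t' a * (s * X ω τ b) := by simp
      _ = s * c ω t' := by rw [hc]; ring
  have hfun : (fun s : ℝ => L (updEntry (0 : Fin d → Fin d → ℝ) a b s))
      = fun s : ℝ => ∑ ω, p ω * crossEntropy (Y ω)
          (fun k => ∑ t, A ω k t * softmax (fun t' => s * c ω t') t) := by
    funext s
    rw [hL]
    congr 1; ext ω
    congr 1
    congr 1
    funext k
    rw [hξ]
    congr 1; ext t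
    congr 2
    funext t'
    exact hupd ω t' s
  rw [hfun]
  have hder : HasDerivAt
      (fun s : ℝ => ∑ ω, p ω * crossEntropy (Y ω)
        (fun k => ∑ t, A ω k t * softmax (fun t' => s * c ω t') t))
      (∑ ω, p ω * ∑ k, (softmax (fun k' => (1/(T:ℝ)) * ∑ t, A ω k' t) k
          - if Y ω = k then 1 else 0) *
        ((1/(T:ℝ)) * ∑ t, A ω k t * (c ω t - (1/(T:ℝ)) * ∑ s', c ω s'))) 0 := by
    apply HasDerivAt.fun_sum
    intro ω _
    exact (key hT (A ω) (c ω) (Y ω)).const_mul (p ω)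
  convert hder using 1
  rw [Finset.sum_comm]
  apply Finset.sum_congr rfl
  intro ω _
  conv_rhs => rw [Finset.mul_sum]
  apply Finset.sum_congr rfl
  intro k _
  have hterm : ∀ t, (c ω t - (1/(T:ℝ)) * ∑ s', c ω s')
      = (X ω t a - (1/(T:ℝ)) * ∑ s, X ω s a) * X ω τ b := by
    intro t
    simp only [hc]
    rw [← Finset.sum_mul]
    ring
  have hsum2 : (∑ t, A ω k t * (c ω t - (1/(T:ℝ)) * ∑ s', c ω s'))
      = ∑ t, A ω k t * ((X ω t a - (1/(T:ℝ)) * ∑ s, X ω s a) * X ω τ b) := by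
    apply Finset.sum_congr rfl
    intro t _
    rw [hterm t]
  rw [hsum2, hphat]
  simp only [hA]
  ring
end

section
/- Let W = (d/(2d')) U V with U = U₀ + ∑_i y_i (V₀ x_i)^⊤ and V = V₀ + ∑_i (U₀^⊤ y_i) x_i^⊤, where U₀ ∈ ℝ^{d×d'}, V₀ ∈ ℝ^{d'×d} have i.i.d. N(0,1/d) entries, and (x_i), (y_i) are orthonormal families. Assume the rescaled vectors x̃_i = √(d/d') V₀ x_i and ỹ_i = √(d/d') U₀^⊤ y_i are ε-nearly orthonormal and that |ỹ_k^⊤ x̃_l| ≤ ε for all k,l. Then |y_k^⊤ W x_l - 1{k=l}| ≤ C·n·ε for all k,l, where n is the number of stored pairs and C an absolute constant; i.e., the factorized matrix W implements the same associative memory as W_* = ∑_i y_i x_i^⊤. -/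
open Finset

/-- Euclidean inner product on `ℝ^d`. -/
noncomputable def dot {d : ℕ} (u v : Fin d → ℝ) : ℝ := ∑ a, u a * v a

/-- the factorized matrix `W = (d/(2d')) U V`, with
`U = U₀ + ∑_i y_i (V₀ x_i)^⊤` and `V = V₀ + ∑_i (U₀^⊤ y_i) x_i^⊤`, implements the same
associative memory as `W_* = ∑_i y_i x_i^⊤`: under the stated near-orthonormality
assumptions on the rescaled vectors `x̃_i = √(d/d') V₀ x_i` and `ỹ_i = √(d/d') U₀^⊤ y_i`,
`|y_k^⊤ W x_l - 1{k=l}| ≤ C·n·ε` for all `k, l`, with `C` an absolute constant. -/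
theorem factorized_assoc_memory :
    ∃ C : ℝ, 0 < C ∧
      ∀ (d d' n : ℕ), 0 < d → 0 < d' →
      ∀ (x y : Fin n → Fin d → ℝ) (U0 : Fin d → Fin d' → ℝ) (V0 : Fin d' → Fin d → ℝ)
        (ε : ℝ), 0 ≤ ε →
        -- (x_i) and (y_i) are orthonormal families
        (∀ i i', dot (x i) (x i') = if i = i' then 1 else 0) →
        (∀ i i', dot (y i) (y i') = if i = i' then 1 else 0) →
        ∀ (xt yt : Fin n → Fin d' → ℝ),
        -- x̃_i = √(d/d') V₀ x_i and ỹ_i = √(d/d') U₀^⊤ y_i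
        (∀ i c, xt i c = Real.sqrt ((d : ℝ) / d') * ∑ b, V0 c b * x i b) →
        (∀ i c, yt i c = Real.sqrt ((d : ℝ) / d') * ∑ a, U0 a c * y i a) →
        -- the rescaled vectors are ε-nearly orthonormal, with ε-small cross terms
        (∀ i i', |(∑ c, xt i c * xt i' c) - if i = i' then 1 else 0| ≤ ε) →
        (∀ i i', |(∑ c, yt i c * yt i' c) - if i = i' then 1 else 0| ≤ ε) →
        (∀ k l, |∑ c, yt k c * xt l c| ≤ ε) →
        ∀ (U : Fin d → Fin d' → ℝ) (V : Fin d' → Fin d → ℝ) (W : Fin d → Fin d → ℝ),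
        (∀ a c, U a c = U0 a c + ∑ i, y i a * ∑ b, V0 c b * x i b) →
        (∀ c b, V c b = V0 c b + ∑ i, (∑ a, U0 a c * y i a) * x i b) →
        (∀ a b, W a b = ((d : ℝ) / (2 * d')) * ∑ c, U a c * V c b) →
        ∀ k l, |(∑ a, y k a * ∑ b, W a b * x l b) - if k = l then 1 else 0|
          ≤ C * n * ε := by
  refine ⟨2, by norm_num, ?_⟩
  intro d d' n hd hd' x y U0 V0 ε hε hx hy xt yt hxt hyt hxx hyy hcross U V W hU hV hW k l
  set s : ℝ := Real.sqrt ((d : ℝ) / d') with hs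
  have hs2 : s * s = (d : ℝ) / d' := Real.mul_self_sqrt (by positivity)
  set P : Fin n → Fin d' → ℝ := fun i c => ∑ b, V0 c b * x i b with hP
  set Q : Fin n → Fin d' → ℝ := fun i c => ∑ a, U0 a c * y i a with hQ
  -- step 1
  have step1 : ∀ c, (∑ a, y k a * U a c) = Q k c + P k c := by
    intro c
    have h1 : (∑ a, y k a * U a c)
        = (∑ a, U0 a c * y k a) + ∑ i, (∑ a, y k a * y i a) * P i c := by
      simp only [hU, mul_add, Finset.sum_add_distrib, Finset.mul_sum, Finset.sum_mul]
      rw [Finset.sum_comm]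
      congr 1
      · exact Finset.sum_congr rfl fun a _ => mul_comm _ _
      · exact Finset.sum_congr rfl fun i _ => Finset.sum_congr rfl fun a _ => by
          simp only [hP]; rw [Finset.mul_sum]
          exact Finset.sum_congr rfl fun b _ => by ring
    rw [h1]
    have h2 : ∑ i, (∑ a, y k a * y i a) * P i c = P k c := by
      have h : ∀ i, (∑ a, y k a * y i a) = if k = i then 1 else 0 := fun i => hy k i
      simp only [h, ite_mul, one_mul, zero_mul]
      simp
    rw [h2]
  -- step 2
  have step2 : ∀ c, (∑ b, V c b * x l b) = P l c + Q l c := by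
    intro c
    have h1 : (∑ b, V c b * x l b)
        = P l c + ∑ i, Q i c * (∑ b, x i b * x l b) := by
      simp only [hV, add_mul, Finset.sum_add_distrib, Finset.sum_mul]
      congr 1
      rw [Finset.sum_comm]
      refine Finset.sum_congr rfl fun i _ => ?_
      rw [Finset.mul_sum]
      exact Finset.sum_congr rfl fun b _ => by
        simp only [hQ]; rw [Finset.sum_mul]
        exact Finset.sum_congr rfl fun a _ => by ring
    rw [h1]
    have h2 : ∑ i, Q i c * (∑ b, x i b * x l b) = Q l c := by
      have h : ∀ i, (∑ b, x i b * x l b) = if i = l then 1 else 0 := fun i => hx i l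
      simp only [h, mul_ite, mul_one, mul_zero]
      simp
    rw [h2]
  -- step 3
  have inner : ∀ a, (∑ b, W a b * x l b)
      = ((d : ℝ) / (2 * d')) * ∑ c, U a c * (P l c + Q l c) := by
    intro a
    calc ∑ b, W a b * x l b
        = ∑ b, ∑ c, ((d : ℝ) / (2 * d')) * (U a c * V c b * x l b) := by
          refine Finset.sum_congr rfl fun b _ => ?_
          simp only [hW, Finset.mul_sum, Finset.sum_mul]
          exact Finset.sum_congr rfl fun c _ => by ring
      _ = ∑ c, ∑ b, ((d : ℝ) / (2 * d')) * (U a c * V c b * x l b) := Finset.sum_comm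
      _ = ((d : ℝ) / (2 * d')) * ∑ c, U a c * ∑ b, V c b * x l b := by
          rw [Finset.mul_sum]
          refine Finset.sum_congr rfl fun c _ => ?_
          rw [Finset.mul_sum, Finset.mul_sum]
          exact Finset.sum_congr rfl fun b _ => by ring
      _ = _ := by
          congr 1
          exact Finset.sum_congr rfl fun c _ => by rw [step2 c]
  have main : (∑ a, y k a * ∑ b, W a b * x l b)
      = ((d : ℝ) / (2 * d')) * ∑ c, (Q k c + P k c) * (P l c + Q l c) := by
    calc ∑ a, y k a * ∑ b, W a b * x l b
        = ∑ a, ∑ c, ((d : ℝ) / (2 * d')) * (y k a * U a c * (P l c + Q l c)) := by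
          refine Finset.sum_congr rfl fun a _ => ?_
          rw [inner a, Finset.mul_sum, Finset.mul_sum]
          exact Finset.sum_congr rfl fun c _ => by ring
      _ = ∑ c, ∑ a, ((d : ℝ) / (2 * d')) * (y k a * U a c * (P l c + Q l c)) := Finset.sum_comm
      _ = ((d : ℝ) / (2 * d')) * ∑ c, (Q k c + P k c) * (P l c + Q l c) := by
          rw [Finset.mul_sum]
          refine Finset.sum_congr rfl fun c _ => ?_
          rw [← step1 c, Finset.sum_mul, Finset.mul_sum]
  -- step 4
  have hxtP : ∀ i c, xt i c = s * P i c := fun i c => hxt i c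
  have hytQ : ∀ i c, yt i c = s * Q i c := fun i c => hyt i c
  have hhalf : ((d : ℝ) / (2 * d')) = s * s / 2 := by
    rw [hs2]; ring
  have main2 : (∑ a, y k a * ∑ b, W a b * x l b)
      = (1/2) * ((∑ c, yt k c * xt l c) + (∑ c, yt k c * yt l c)
          + (∑ c, xt k c * xt l c) + (∑ c, yt l c * xt k c)) := by
    rw [main]
    have e : ∀ c, ((d : ℝ) / (2 * d')) * ((Q k c + P k c) * (P l c + Q l c))
        = 1/2 * (yt k c * xt l c + yt k c * yt l c + xt k c * xt l c + yt l c * xt k c) := by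
      intro c
      rw [hxtP k c, hxtP l c, hytQ k c, hytQ l c, hhalf]
      ring
    rw [Finset.mul_sum, Finset.sum_congr rfl fun c _ => e c, ← Finset.mul_sum]
    congr 1
    rw [Finset.sum_add_distrib, Finset.sum_add_distrib, Finset.sum_add_distrib]
  rw [main2]
  have hA := hcross k l
  have hB := hyy k l
  have hCc := hxx k l
  have hD := hcross l k
  have key : (1/2) * ((∑ c, yt k c * xt l c) + (∑ c, yt k c * yt l c)
          + (∑ c, xt k c * xt l c) + (∑ c, yt l c * xt k c)) - (if k = l then (1:ℝ) else 0)
      = (1/2) * ((∑ c, yt k c * xt l c)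
          + ((∑ c, yt k c * yt l c) - (if k = l then (1:ℝ) else 0))
          + ((∑ c, xt k c * xt l c) - (if k = l then (1:ℝ) else 0))
          + (∑ c, yt l c * xt k c)) := by
    by_cases h : k = l <;> simp [h] <;> ring
  rw [key]
  have hbound : |(1/2) * ((∑ c, yt k c * xt l c)
          + ((∑ c, yt k c * yt l c) - (if k = l then (1:ℝ) else 0))
          + ((∑ c, xt k c * xt l c) - (if k = l then (1:ℝ) else 0))
          + (∑ c, yt l c * xt k c))| ≤ 2 * ε := by
    rw [abs_mul]
    have h1 : |(∑ c, yt k c * xt l c)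
          + ((∑ c, yt k c * yt l c) - (if k = l then (1:ℝ) else 0))
          + ((∑ c, xt k c * xt l c) - (if k = l then (1:ℝ) else 0))
          + (∑ c, yt l c * xt k c)| ≤ ε + ε + ε + ε := by
      calc _ ≤ |(∑ c, yt k c * xt l c)
          + ((∑ c, yt k c * yt l c) - (if k = l then (1:ℝ) else 0))
          + ((∑ c, xt k c * xt l c) - (if k = l then (1:ℝ) else 0))| + |(∑ c, yt l c * xt k c)| :=
            abs_add_le _ _
        _ ≤ (|(∑ c, yt k c * xt l c)
          + ((∑ c, yt k c * yt l c) - (if k = l then (1:ℝ) else 0))|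
          + |(∑ c, xt k c * xt l c) - (if k = l then (1:ℝ) else 0)|) + |(∑ c, yt l c * xt k c)| :=
            by gcongr; exact abs_add_le _ _
        _ ≤ ((|(∑ c, yt k c * xt l c)| + |(∑ c, yt k c * yt l c) - (if k = l then (1:ℝ) else 0)|)
          + |(∑ c, xt k c * xt l c) - (if k = l then (1:ℝ) else 0)|) + |(∑ c, yt l c * xt k c)| :=
            by gcongr; exact abs_add_le _ _
        _ ≤ ε + ε + ε + ε := by gcongr <;> assumption
    have h2 : |(1/2 : ℝ)| = 1/2 := by norm_num
    rw [h2]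
    linarith
  have hn : (1 : ℝ) ≤ n := by
    have : 0 < n := Fin.pos k
    exact_mod_cast this
  calc _ ≤ 2 * ε := hbound
    _ ≤ 2 * n * ε := by nlinarith
end

section
/- In the single-trigger data model, after one population gradient step from W = 0 on the bag-of-words loss (uniform attention), W_O² = (η/(NT)) ∑_{k=1}^N w_U(k)(W_V²(w_E(k) - w̄_E))^⊤ + (ητ/(NT)) ∑_{k=1}^N w_U(k)(W_V² Φ₁(w_E(k) - w̄_E))^⊤, where τ = E[∑_{t=t_o}^T 1/t] and w̄_E = (1/N)∑_k w_E(k). If the embeddings and their images under W_V² and W_V²Φ₁ form an exactly orthonormal system across the relevant families, then w_U(k)^⊤ W_O² W_V² w_E(j) = (η/(NT))(1{k=j} - 1/N). -/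
open Finset

/-- in the single-trigger model, one population gradient step from `W = 0`
on the bag-of-words loss gives
`W_O² = (η/(NT)) ∑_k w_U(k)(W_V²(w_E(k) - w̄_E))^⊤ + (ητ/(NT)) ∑_k w_U(k)(W_V²Φ₁(w_E(k) - w̄_E))^⊤`,
and if the relevant families are exactly orthonormal then
`w_U(k)^⊤ W_O² W_V² w_E(j) = (η/(NT))(1{k=j} - 1/N)`. -/
theorem one_step_WO2 {N T d : ℕ} (hN : 0 < N) (hT : 0 < T) (η τ : ℝ)
    (wE wU : Fin N → Fin d → ℝ) (WV2 Φ₁ : Fin d → Fin d → ℝ)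
    -- A k = W_V² w_E(k) and B k = W_V² Φ₁ w_E(k)
    (A B : Fin N → Fin d → ℝ)
    (hA : ∀ k a, A k a = ∑ b, WV2 a b * wE k b)
    (hB : ∀ k a, B k a = ∑ b, (∑ c, WV2 a c * Φ₁ c b) * wE k b)
    -- E[x|y=k] - E[x] = (1/T) W_V²(w_E(k)-w̄_E) + (τ/T) W_V²Φ₁(w_E(k)-w̄_E)
    (μdiff : Fin N → Fin d → ℝ)
    (hμdiff : ∀ k a, μdiff k a =
      (1 / (T : ℝ)) * (∑ b, WV2 a b * (wE k b - (1 / (N : ℝ)) * ∑ k', wE k' b)) +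
      (τ / (T : ℝ)) *
        (∑ b, (∑ c, WV2 a c * Φ₁ c b) * (wE k b - (1 / (N : ℝ)) * ∑ k', wE k' b)))
    -- W_O² after one gradient step: (η/N) ∑_k w_U(k) (E[x|y=k] - E[x])^⊤
    (WO2 : Fin d → Fin d → ℝ)
    (hWO2 : ∀ a b, WO2 a b = (η / N) * ∑ k, wU k a * μdiff k b)
    -- the families w_U, A, B jointly form an exactly orthonormal system
    (horth : ∀ i j : Fin N ⊕ (Fin N ⊕ Fin N),
      dot (Sum.elim wU (Sum.elim A B) i) (Sum.elim wU (Sum.elim A B) j) =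
        if i = j then 1 else 0) :
    (∀ a b, WO2 a b =
      (η / ((N : ℝ) * T)) * ∑ k, wU k a * (A k b - (1 / (N : ℝ)) * ∑ k', A k' b) +
      (η * τ / ((N : ℝ) * T)) * ∑ k, wU k a * (B k b - (1 / (N : ℝ)) * ∑ k', B k' b)) ∧
    (∀ k j : Fin N,
      dot (wU k) (fun a => ∑ b, WO2 a b * A j b) =
        (η / ((N : ℝ) * T)) * ((if k = j then 1 else 0) - 1 / N)) := by
  have hAdiff : ∀ k b, A k b - (1/(N:ℝ)) * ∑ k', A k' b
      = ∑ c, WV2 b c * (wE k c - (1/(N:ℝ)) * ∑ k', wE k' c) := by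
    intro k b
    simp only [hA, mul_sub, Finset.sum_sub_distrib, Finset.mul_sum]
    congr 1
    rw [Finset.sum_comm]
    exact Finset.sum_congr rfl fun c _ => Finset.sum_congr rfl fun k' _ => by ring
  have hBdiff : ∀ k b, B k b - (1/(N:ℝ)) * ∑ k', B k' b
      = ∑ c, (∑ c', WV2 b c' * Φ₁ c' c) * (wE k c - (1/(N:ℝ)) * ∑ k', wE k' c) := by
    intro k b
    simp only [hB, mul_sub, Finset.sum_sub_distrib, Finset.mul_sum]
    congr 1
    rw [Finset.sum_comm]
    exact Finset.sum_congr rfl fun c _ => Finset.sum_congr rfl fun k' _ => by ring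
  have hμ' : ∀ k b, μdiff k b =
      (1/(T:ℝ)) * (A k b - (1/(N:ℝ)) * ∑ k', A k' b) +
      (τ/(T:ℝ)) * (B k b - (1/(N:ℝ)) * ∑ k', B k' b) := by
    intro k b
    rw [hμdiff, hAdiff, hBdiff]
  have part1 : ∀ a b, WO2 a b =
      (η / ((N : ℝ) * T)) * ∑ k, wU k a * (A k b - (1 / (N : ℝ)) * ∑ k', A k' b) +
      (η * τ / ((N : ℝ) * T)) * ∑ k, wU k a * (B k b - (1 / (N : ℝ)) * ∑ k', B k' b) := by
    intro a b
    conv_rhs => enter [1]; rw [Finset.mul_sum]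
    conv_rhs => enter [2]; rw [Finset.mul_sum]
    rw [hWO2, Finset.mul_sum, ← Finset.sum_add_distrib]
    exact Finset.sum_congr rfl fun m _ => by rw [hμ']; ring
  refine ⟨part1, ?_⟩
  have hUU : ∀ k m : Fin N, (∑ a, wU k a * wU m a) = if k = m then 1 else 0 := by
    intro k m
    have := horth (Sum.inl k) (Sum.inl m)
    simpa [dot] using this
  have hAA : ∀ k m : Fin N, (∑ b, A k b * A m b) = if k = m then 1 else 0 := by
    intro k m
    have := horth (Sum.inr (Sum.inl k)) (Sum.inr (Sum.inl m))
    simpa [dot] using this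
  have hBA : ∀ k m : Fin N, (∑ b, B k b * A m b) = 0 := by
    intro k m
    have := horth (Sum.inr (Sum.inr k)) (Sum.inr (Sum.inl m))
    simpa [dot] using this
  have hsum1 : ∀ j : Fin N, (∑ b, (∑ k', A k' b) * A j b) = 1 := by
    intro j
    simp only [Finset.sum_mul]
    rw [Finset.sum_comm]
    simp [hAA]
  have hsum2 : ∀ j : Fin N, (∑ b, (∑ k', B k' b) * A j b) = 0 := by
    intro j
    simp only [Finset.sum_mul]
    rw [Finset.sum_comm]
    simp [hBA]
  have hμA : ∀ m j : Fin N, (∑ b, μdiff m b * A j b)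
      = (1/(T:ℝ)) * ((if m = j then 1 else 0) - 1/(N:ℝ)) := by
    intro m j
    have hterm : ∀ b, μdiff m b * A j b
        = (1/(T:ℝ)) * (A m b * A j b) - (1/(T:ℝ)) * ((1/(N:ℝ)) * ((∑ k', A k' b) * A j b))
          + ((τ/(T:ℝ)) * (B m b * A j b)
            - (τ/(T:ℝ)) * ((1/(N:ℝ)) * ((∑ k', B k' b) * A j b))) := by
      intro b
      rw [hμ']
      ring
    simp only [hterm]
    rw [Finset.sum_add_distrib, Finset.sum_sub_distrib, Finset.sum_sub_distrib,
      ← Finset.mul_sum, ← Finset.mul_sum, ← Finset.mul_sum, ← Finset.mul_sum,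
      ← Finset.mul_sum, ← Finset.mul_sum, hAA, hBA, hsum1, hsum2]
    ring
  intro k j
  show ∑ a, wU k a * ∑ b, WO2 a b * A j b = _
  have e2 : ∀ a, (∑ b, WO2 a b * A j b)
      = (η / (N:ℝ)) * ∑ m, wU m a * ((1/(T:ℝ)) * ((if m = j then 1 else 0) - 1/(N:ℝ))) := by
    intro a
    calc ∑ b, WO2 a b * A j b
        = ∑ b, ∑ m, (η / (N:ℝ)) * (wU m a * (μdiff m b * A j b)) := by
          refine Finset.sum_congr rfl fun b _ => ?_
          rw [hWO2, Finset.mul_sum, Finset.sum_mul]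
          exact Finset.sum_congr rfl fun m _ => by ring
      _ = ∑ m, ∑ b, (η / (N:ℝ)) * (wU m a * (μdiff m b * A j b)) := Finset.sum_comm
      _ = ∑ m, (η / (N:ℝ)) * (wU m a * ∑ b, μdiff m b * A j b) := by
          refine Finset.sum_congr rfl fun m _ => ?_
          rw [Finset.mul_sum, Finset.mul_sum]
      _ = (η / (N:ℝ)) * ∑ m, wU m a * ((1/(T:ℝ)) * ((if m = j then 1 else 0) - 1/(N:ℝ))) := by
          rw [Finset.mul_sum]
          exact Finset.sum_congr rfl fun m _ => by rw [hμA]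
  simp only [e2]
  have e3 : ∑ a, wU k a * ((η / (N:ℝ)) * ∑ m, wU m a * ((1/(T:ℝ)) * ((if m = j then 1 else 0) - 1/(N:ℝ))))
      = ∑ m, (η / (N:ℝ)) * (((1/(T:ℝ)) * ((if m = j then 1 else 0) - 1/(N:ℝ))) * ∑ a, wU k a * wU m a) := by
    calc ∑ a, wU k a * ((η / (N:ℝ)) * ∑ m, wU m a * ((1/(T:ℝ)) * ((if m = j then 1 else 0) - 1/(N:ℝ))))
        = ∑ a, ∑ m, (η / (N:ℝ)) * (((1/(T:ℝ)) * ((if m = j then 1 else 0) - 1/(N:ℝ))) * (wU k a * wU m a)) := by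
          refine Finset.sum_congr rfl fun a _ => ?_
          rw [Finset.mul_sum, Finset.mul_sum]
          exact Finset.sum_congr rfl fun m _ => by ring
      _ = ∑ m, ∑ a, (η / (N:ℝ)) * (((1/(T:ℝ)) * ((if m = j then 1 else 0) - 1/(N:ℝ))) * (wU k a * wU m a)) :=
          Finset.sum_comm
      _ = _ := by
          refine Finset.sum_congr rfl fun m _ => ?_
          rw [Finset.mul_sum, Finset.mul_sum]
  rw [e3]
  simp only [hUU]
  rw [Finset.sum_eq_single k (fun m _ hm => by simp [Ne.symm hm]) (by simp)]
  simp only [if_pos rfl, mul_one, eq_self_iff_true, if_true]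
  ring
end
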